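/- Let H₁ and H₂ be bounded, self-adjoint linear operators on X, each satisfying ⟨H_i x, x⟩ ≥ c_i‖x‖² for some c_i > 0 (hence invertible), and let φ : X → ℝ ∪ {+∞} be proper, convex and lower semicontinuous. Fix z ∈ X, and suppose p₁ minimizes x ↦ φ(x) + ½⟨H₁(x − z), x − z⟩ over X and p₂ minimizes x ↦ φ(x) + ½⟨H₂(x − z), x − z⟩ over X. Then ‖p₁ − p₂‖ ≤ ‖H₁⁻¹‖ · ‖(H₁ − H₂)(z − p₂)‖. -/

import Mathlib

open scoped RealInnerProductSpace

lemma subgrad_aux {X : Type*} [NormedAddCommGroup X] [InnerProductSpace ℝ X]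
    (H : X →L[ℝ] X) (hsa : ∀ x y : X, ⟪H x, y⟫ = ⟪x, H y⟫)
    (φ : X → WithTop ℝ)
    (hconv : ∀ x y : X, ∀ a b : ℝ, 0 ≤ a → 0 ≤ b → a + b = 1 →
      φ (a • x + b • y) ≤ (a : WithTop ℝ) * φ x + (b : WithTop ℝ) * φ y)
    (z p : X)
    (hp : ∀ x : X, φ p + ((2⁻¹ * ⟪H (p - z), p - z⟫ : ℝ) : WithTop ℝ)
        ≤ φ x + ((2⁻¹ * ⟪H (x - z), x - z⟫ : ℝ) : WithTop ℝ))
    (x : X) (fp fx : ℝ) (hfp : φ p = (fp : WithTop ℝ)) (hfx : φ x = (fx : WithTop ℝ)) :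
    fp ≤ fx + ⟪H (p - z), x - p⟫ := by
  set w := p - z with hw
  set v := x - p with hv
  set K := ⟪H v, v⟫ with hK
  -- key step inequality for each t ∈ (0,1]
  have key : ∀ t : ℝ, 0 < t → t ≤ 1 → fp ≤ fx + ⟪H w, v⟫ + t / 2 * K := by
    intro t ht ht1
    have hcomb : (1 - t) • p + t • x - z = w + t • v := by
      rw [hw, hv]; module
    have h1 := hp ((1 - t) • p + t • x)
    have h2 := hconv p x (1 - t) t (by linarith) (by linarith) (by ring)
    -- expand the quadratic
    have hq : (2⁻¹ * ⟪H ((1 - t) • p + t • x - z), (1 - t) • p + t • x - z⟫ : ℝ)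
        = 2⁻¹ * ⟪H w, w⟫ + t * ⟪H w, v⟫ + t ^ 2 / 2 * K := by
      rw [hcomb, hK]
      have hsym : ⟪H v, w⟫ = ⟪H w, v⟫ := by
        rw [hsa v w, real_inner_comm]
      simp only [map_add, map_smul, inner_add_left, inner_add_right,
        inner_smul_left, inner_smul_right, RCLike.conj_to_real]
      nlinarith [hsym]
    rw [hfp] at h1
    rw [hfp, hfx] at h2
    have h3 : φ ((1 - t) • p + t • x) ≤ (((1 - t) * fp + t * fx : ℝ) : WithTop ℝ) := by
      refine h2.trans_eq ?_
      push_cast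
      ring
    have h4 : ((fp + 2⁻¹ * ⟪H w, w⟫ : ℝ) : WithTop ℝ)
        ≤ (((1 - t) * fp + t * fx + (2⁻¹ * ⟪H w, w⟫ + t * ⟪H w, v⟫ + t ^ 2 / 2 * K) : ℝ)
          : WithTop ℝ) := by
      push_cast
      calc (fp : WithTop ℝ) + ((2⁻¹ * ⟪H w, w⟫ : ℝ) : WithTop ℝ)
          ≤ φ ((1 - t) • p + t • x)
            + ((2⁻¹ * ⟪H ((1 - t) • p + t • x - z), (1 - t) • p + t • x - z⟫ : ℝ)
              : WithTop ℝ) := h1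
        _ ≤ (((1 - t) * fp + t * fx : ℝ) : WithTop ℝ)
            + ((2⁻¹ * ⟪H w, w⟫ + t * ⟪H w, v⟫ + t ^ 2 / 2 * K : ℝ) : WithTop ℝ) := by
            rw [hq]
            exact add_le_add_left h3 _
        _ = _ := by push_cast; ring
    have h5 := WithTop.coe_le_coe.mp h4
    nlinarith [h5]
  -- take t → 0
  have hKK : ∀ ε : ℝ, 0 < ε → fp ≤ fx + ⟪H w, v⟫ + ε := by
    intro ε hε
    have habs : (0:ℝ) < |K| + 1 := by positivity
    set t := min 1 (ε / (|K| + 1)) with hts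
    have ht0 : 0 < t := lt_min one_pos (by positivity)
    have ht1 : t ≤ 1 := min_le_left _ _
    have h := key t ht0 ht1
    have hKle : t / 2 * K ≤ ε := by
      have h1 : t / 2 * K ≤ t * |K| := by
        have := mul_le_mul_of_nonneg_left (le_abs_self K) (by positivity : (0:ℝ) ≤ t / 2)
        nlinarith [abs_nonneg K, ht0.le]
      have h2 : t * |K| ≤ (ε / (|K| + 1)) * (|K| + 1) := by
        have := min_le_right 1 (ε / (|K| + 1))
        nlinarith [abs_nonneg K, ht0.le]
      rw [div_mul_cancel₀] at h2
      · linarith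
      · positivity
    linarith
  have := le_of_forall_pos_le_add hKK
  linarith
open scoped RealInnerProductSpace
open ContinuousLinearMap

lemma bilin_cs {X : Type*} [NormedAddCommGroup X] [InnerProductSpace ℝ X]
    (H : X →L[ℝ] X) (hsa : ∀ x y : X, ⟪H x, y⟫ = ⟪x, H y⟫)
    (hnn : ∀ x : X, 0 ≤ ⟪H x, x⟫) (x y : X) :
    ⟪H x, y⟫ ^ 2 ≤ ⟪H x, x⟫ * ⟪H y, y⟫ := by
  have h : ∀ t : ℝ, 0 ≤ ⟪H y, y⟫ * (t * t) + (2 * ⟪H x, y⟫) * t + ⟪H x, x⟫ := by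
    intro t
    have hq := hnn (x + t • y)
    have hsym : ⟪H y, x⟫ = ⟪H x, y⟫ := by rw [hsa y x, real_inner_comm]
    simp only [map_add, map_smul, inner_add_left, inner_add_right,
      inner_smul_left, inner_smul_right, RCLike.conj_to_real] at hq
    rw [hsym] at hq
    ring_nf at hq ⊢
    linarith
  have := discrim_le_zero h
  rw [discrim] at this
  nlinarith [this]
theorem stmt_8 {X : Type*} [NormedAddCommGroup X] [InnerProductSpace ℝ X] [CompleteSpace X]
    (H₁ H₂ : X →L[ℝ] X)
    (hH₁sa : ∀ x y : X, ⟪H₁ x, y⟫ = ⟪x, H₁ y⟫)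
    (hH₂sa : ∀ x y : X, ⟪H₂ x, y⟫ = ⟪x, H₂ y⟫)
    (hH₁coer : ∃ c : ℝ, 0 < c ∧ ∀ x : X, c * ‖x‖ ^ 2 ≤ ⟪H₁ x, x⟫)
    (hH₂coer : ∃ c : ℝ, 0 < c ∧ ∀ x : X, c * ‖x‖ ^ 2 ≤ ⟪H₂ x, x⟫)
    (φ : X → WithTop ℝ)
    (hproper : ∃ x, φ x ≠ ⊤)
    (hconv : ∀ x y : X, ∀ a b : ℝ, 0 ≤ a → 0 ≤ b → a + b = 1 →
      φ (a • x + b • y) ≤ (a : WithTop ℝ) * φ x + (b : WithTop ℝ) * φ y)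
    (hlsc : LowerSemicontinuous φ)
    (z p₁ p₂ : X)
    (hp₁ : ∀ x : X, φ p₁ + ((2⁻¹ * ⟪H₁ (p₁ - z), p₁ - z⟫ : ℝ) : WithTop ℝ)
        ≤ φ x + ((2⁻¹ * ⟪H₁ (x - z), x - z⟫ : ℝ) : WithTop ℝ))
    (hp₂ : ∀ x : X, φ p₂ + ((2⁻¹ * ⟪H₂ (p₂ - z), p₂ - z⟫ : ℝ) : WithTop ℝ)
        ≤ φ x + ((2⁻¹ * ⟪H₂ (x - z), x - z⟫ : ℝ) : WithTop ℝ)) :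
    ∀ H₁inv : X →L[ℝ] X, H₁inv ∘L H₁ = 1 → H₁ ∘L H₁inv = 1 →
      ‖p₁ - p₂‖ ≤ ‖H₁inv‖ * ‖(H₁ - H₂) (z - p₂)‖ := by
  intro G hGl hGr
  obtain ⟨x₀, hx₀⟩ := hproper
  -- finiteness of φ p₁ and φ p₂
  have hfin : ∀ (H : X →L[ℝ] X) (p : X),
      (∀ x : X, φ p + ((2⁻¹ * ⟪H (p - z), p - z⟫ : ℝ) : WithTop ℝ)
        ≤ φ x + ((2⁻¹ * ⟪H (x - z), x - z⟫ : ℝ) : WithTop ℝ)) → φ p ≠ ⊤ := by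
    intro H p hp
    have h := hp x₀
    intro htop
    rw [htop] at h
    simp only [WithTop.top_add] at h
    exact (h.trans_lt (by
      refine WithTop.add_lt_top.mpr ⟨hx₀.lt_top, WithTop.coe_lt_top _⟩)).ne rfl
  obtain ⟨f₁, hf₁⟩ := WithTop.ne_top_iff_exists.mp (hfin H₁ p₁ hp₁)
  obtain ⟨f₂, hf₂⟩ := WithTop.ne_top_iff_exists.mp (hfin H₂ p₂ hp₂)
  -- subgradient inequalities
  have hs₁ : f₁ ≤ f₂ + ⟪H₁ (p₁ - z), p₂ - p₁⟫ :=
    subgrad_aux H₁ hH₁sa φ hconv z p₁ hp₁ p₂ f₁ f₂ hf₁.symm hf₂.symm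
  have hs₂ : f₂ ≤ f₁ + ⟪H₂ (p₂ - z), p₁ - p₂⟫ :=
    subgrad_aux H₂ hH₂sa φ hconv z p₂ hp₂ p₁ f₂ f₁ hf₂.symm hf₁.symm
  set u := p₁ - p₂ with hu
  set d := (H₁ - H₂) (z - p₂) with hd
  -- key monotonicity inequality
  have hmono : ⟪H₁ u, u⟫ ≤ ⟪d, u⟫ := by
    have e1 : ⟪H₁ (p₁ - z), p₂ - p₁⟫ = -⟪H₁ (p₂ - z), u⟫ - ⟪H₁ u, u⟫ := by
      have : p₁ - z = (p₂ - z) + u := by rw [hu]; abel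
      rw [this]
      simp only [map_add, inner_add_left]
      have : p₂ - p₁ = -u := by rw [hu]; abel
      rw [this, inner_neg_right, inner_neg_right]
      ring
    have e2 : ⟪H₂ (p₂ - z), p₁ - p₂⟫ = ⟪H₂ (p₂ - z), u⟫ := by rw [hu]
    have e3 : ⟪d, u⟫ = ⟪H₂ (p₂ - z), u⟫ - ⟪H₁ (p₂ - z), u⟫ := by
      rw [hd]
      have : z - p₂ = -(p₂ - z) := by abel
      simp only [this, ContinuousLinearMap.sub_apply, map_neg, inner_neg_left,
        inner_sub_left]
      ring
    rw [e3]
    rw [e1] at hs₁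
    rw [e2] at hs₂
    linarith
  obtain ⟨c₁, hc₁pos, hc₁⟩ := hH₁coer
  have hnn : ∀ x : X, 0 ≤ ⟪H₁ x, x⟫ := fun x =>
    le_trans (by positivity) (hc₁ x)
  -- ‖u‖² ≤ ‖G‖ ⟪H₁ u, u⟫
  have hnormsq : ‖u‖ ^ 2 * ‖u‖ ^ 2 ≤ ⟪H₁ u, u⟫ * (‖G‖ * ‖u‖ ^ 2) := by
    have hcs := bilin_cs H₁ hH₁sa hnn u (G u)
    have h1 : ⟪H₁ u, G u⟫ = ‖u‖ ^ 2 := by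
      rw [hH₁sa]
      have : H₁ (G u) = u := by
        have := congrArg (fun T : X →L[ℝ] X => T u) hGr
        simpa using this
      rw [this, real_inner_self_eq_norm_sq]
    have h2 : ⟪H₁ (G u), G u⟫ ≤ ‖G‖ * ‖u‖ ^ 2 := by
      have : H₁ (G u) = u := by
        have := congrArg (fun T : X →L[ℝ] X => T u) hGr
        simpa using this
      rw [this]
      calc ⟪u, G u⟫ ≤ ‖u‖ * ‖G u‖ := real_inner_le_norm u (G u)
        _ ≤ ‖u‖ * (‖G‖ * ‖u‖) := by
            have := G.le_opNorm u
            nlinarith [norm_nonneg u]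
        _ = ‖G‖ * ‖u‖ ^ 2 := by ring
    calc ‖u‖ ^ 2 * ‖u‖ ^ 2 = ⟪H₁ u, G u⟫ ^ 2 := by rw [h1]; ring
      _ ≤ ⟪H₁ u, u⟫ * ⟪H₁ (G u), G u⟫ := hcs
      _ ≤ ⟪H₁ u, u⟫ * (‖G‖ * ‖u‖ ^ 2) := by
          exact mul_le_mul_of_nonneg_left h2 (hnn u)
  -- conclude
  rcases eq_or_lt_of_le (norm_nonneg u) with h0 | h0
  · rw [← h0]
    positivity
  · have hdun : ⟪d, u⟫ ≤ ‖d‖ * ‖u‖ := real_inner_le_norm d u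
    have hG0 : (0:ℝ) ≤ ‖G‖ := norm_nonneg G
    -- ‖u‖⁴ ≤ ‖d‖‖u‖ * ‖G‖‖u‖²
    have : ‖u‖ ^ 2 * ‖u‖ ^ 2 ≤ (‖d‖ * ‖u‖) * (‖G‖ * ‖u‖ ^ 2) := by
      calc ‖u‖ ^ 2 * ‖u‖ ^ 2 ≤ ⟪H₁ u, u⟫ * (‖G‖ * ‖u‖ ^ 2) := hnormsq
        _ ≤ (‖d‖ * ‖u‖) * (‖G‖ * ‖u‖ ^ 2) := by
            exact mul_le_mul_of_nonneg_right (le_trans hmono hdun)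
              (by positivity)
    have hcube : (0:ℝ) < ‖u‖ ^ 3 := by positivity
    have h4 : ‖u‖ * ‖u‖ ^ 3 ≤ ‖G‖ * ‖d‖ * ‖u‖ ^ 3 := by nlinarith [this]
    exact le_of_mul_le_mul_right h4 hcube
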